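/- For every real number s, B(β(s)) = ∫₀ˢ ζ(q) β'(q) dq, where B(z) = ∫₀ᶻ ζ(β_r(q)) dq. In particular, the composition B ∘ β : ℝ → [0, ∞) is continuous. -/

import Mathlib

open MeasureTheory intervalIntegral Set Filter
open scoped ENNReal NNReal Topology

/-- For every real `s`, `B (β s) = ∫ q in 0..s, ζ q * β' q`, where
`B z = ∫ q in 0..z, ζ (βr q)` and `βr` is the pseudo-inverse of `β`.
In particular the composition `B ∘ β : ℝ → [0,∞)` is continuous (and nonnegative). -/
theorem stmt3 (β ζ : ℝ → ℝ) (Lβ Lζ : ℝ) (hLβ : 0 < Lβ) (hLζ : 0 < Lζ)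
    (hβmono : Monotone β) (hζmono : Monotone ζ)
    (hβlip : LipschitzWith Lβ.toNNReal β) (hζlip : LipschitzWith Lζ.toNNReal ζ)
    (hβ0 : β 0 = 0) (hζ0 : ζ 0 = 0)
    (βr : ℝ → ℝ)
    (hβr_pos : ∀ z ∈ Set.range β, 0 < z → βr z = sInf {t : ℝ | β t = z})
    (hβr_zero : βr 0 = 0)
    (hβr_neg : ∀ z ∈ Set.range β, z < 0 → βr z = sSup {t : ℝ | β t = z})
    (B : ℝ → ℝ) (hB : ∀ z ∈ Set.range β, B z = ∫ q in (0:ℝ)..z, ζ (βr q)) :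
    (∀ s : ℝ, B (β s) = ∫ q in (0:ℝ)..s, ζ q * deriv β q) ∧
      Continuous (fun s : ℝ => B (β s)) ∧ (∀ s : ℝ, 0 ≤ B (β s)) := by
  have hLβ' : (Lβ.toNNReal : ℝ) = Lβ := Real.coe_toNNReal Lβ hLβ.le
  have hβcont : Continuous β := hβlip.continuous
  have hζcont : Continuous ζ := hζlip.continuous
  -- the pseudo-inverse is a right inverse on the range
  have hβr_inv : ∀ z ∈ Set.range β, β (βr z) = z := by
    rintro z ⟨u, rfl⟩
    rcases lt_trichotomy (β u) 0 with h | h | h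
    · rw [hβr_neg _ ⟨u, rfl⟩ h]
      have hne : {t : ℝ | β t = β u}.Nonempty := ⟨u, rfl⟩
      have hbdd : BddAbove {t : ℝ | β t = β u} := by
        refine ⟨0, fun t ht => ?_⟩
        by_contra hlt
        push_neg at hlt
        have h0 : β 0 ≤ β t := hβmono hlt.le
        rw [hβ0, ht] at h0
        exact absurd h h0.not_gt
      have hcl : IsClosed {t : ℝ | β t = β u} := isClosed_eq hβcont continuous_const
      exact hcl.csSup_mem hne hbdd
    · rw [h, hβr_zero, hβ0]
    · rw [hβr_pos _ ⟨u, rfl⟩ h]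
      have hne : {t : ℝ | β t = β u}.Nonempty := ⟨u, rfl⟩
      have hbdd : BddBelow {t : ℝ | β t = β u} := by
        refine ⟨0, fun t ht => ?_⟩
        by_contra hlt
        push_neg at hlt
        have h0 : β t ≤ β 0 := hβmono hlt.le
        rw [hβ0, ht] at h0
        exact absurd h h0.not_gt
      have hcl : IsClosed {t : ℝ | β t = β u} := isClosed_eq hβcont continuous_const
      exact hcl.csInf_mem hne hbdd
  have hA : ∀ z ∈ Set.range β, ∀ d : ℝ, βr z ≤ d → z ≤ β d := by
    intro z hz d hd
    calc z = β (βr z) := (hβr_inv z hz).symm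
    _ ≤ β d := hβmono hd
  have hB' : ∀ z ∈ Set.range β, ∀ d : ℝ, z < β d → βr z ≤ d := by
    intro z hz d hzd
    by_contra hc
    push_neg at hc
    have h2 : β d ≤ β (βr z) := hβmono hc.le
    rw [hβr_inv z hz] at h2
    exact absurd hzd h2.not_gt
  have hC : ∀ z ∈ Set.range β, ∀ c : ℝ, β c < z → c < βr z := by
    intro z hz c hcz
    by_contra hc
    push_neg at hc
    exact absurd hcz (hA z hz c hc).not_gt
  -- the Stieltjes measure of β
  let S : StieltjesFunction ℝ := ⟨β, hβmono, fun x => hβcont.continuousAt.continuousWithinAt⟩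
  set ν : Measure ℝ := S.measure with hν
  have hνIoc : ∀ a b : ℝ, ν (Set.Ioc a b) = ENNReal.ofReal (β b - β a) := fun a b =>
    S.measure_Ioc a b
  -- absolute continuity
  have hνac : ν ≪ (volume : Measure ℝ) := by
    have hGmono : Monotone fun x : ℝ => Lβ * x - β x := by
      intro x y hxy
      have h1 : β y - β x ≤ Lβ * (y - x) := by
        have h := hβlip.dist_le_mul x y
        rw [Real.dist_eq, Real.dist_eq, hLβ'] at h
        calc β y - β x ≤ |β y - β x| := le_abs_self _
          _ = |β x - β y| := (abs_sub_comm _ _)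
          _ ≤ Lβ * |x - y| := h
          _ = Lβ * (y - x) := by rw [abs_sub_comm, abs_of_nonneg (sub_nonneg.2 hxy)]
      simp only
      linarith
    let G : StieltjesFunction ℝ := ⟨fun x => Lβ * x - β x, hGmono,
      fun x => (((continuous_const.mul continuous_id).sub hβcont).continuousAt).continuousWithinAt⟩
    let Lf : StieltjesFunction ℝ := ⟨fun x => Lβ * x,
      fun x y hxy => by simpa using mul_le_mul_of_nonneg_left hxy hLβ.le,
      fun x => ((continuous_const.mul continuous_id).continuousAt).continuousWithinAt⟩
    have hsum : S + G = Lf := by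
      ext x
      show β x + (Lβ * x - β x) = Lβ * x
      ring
    have hLfvol : Lf.measure = (ENNReal.ofReal Lβ) • (volume : Measure ℝ) := by
      refine Measure.ext_of_Ioc _ _ fun a b hab => ?_
      rw [Lf.measure_Ioc, Measure.smul_apply, smul_eq_mul, Real.volume_Ioc,
        ← ENNReal.ofReal_mul hLβ.le]
      show ENNReal.ofReal (Lβ * b - Lβ * a) = ENNReal.ofReal (Lβ * (b - a))
      ring_nf
    have hle : ν ≤ (ENNReal.ofReal Lβ) • (volume : Measure ℝ) := by
      rw [← hLfvol, ← hsum, StieltjesFunction.measure_add]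
      exact Measure.le_add_right le_rfl
    exact Measure.absolutelyContinuous_of_le_smul hle
  set D : ℝ → ℝ≥0∞ := ν.rnDeriv volume with hD
  have hDmeas : Measurable D := Measure.measurable_rnDeriv _ _
  have hd : ∀ᵐ x, HasDerivAt β ((D x).toReal) x := S.ae_hasDerivAt
  have hderiv_ae : (fun x => deriv β x) =ᵐ[(volume : Measure ℝ)] fun x => (D x).toReal :=
    hd.mono fun x hx => hx.deriv
  have hν_dens : ν = volume.withDensity D := (Measure.withDensity_rnDeriv_eq ν volume hνac).symm
  have hDlt : ∀ᵐ x, D x < ⊤ := Measure.rnDeriv_lt_top ν volume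
  have hDcongr : D =ᵐ[(volume : Measure ℝ)] fun x => ((D x).toNNReal : ℝ≥0∞) :=
    hDlt.mono fun x hx => (ENNReal.coe_toNNReal hx.ne).symm
  -- integrals against ν are integrals against the derivative density
  have hkey2 : ∀ a b : ℝ, ∫ x in Set.Ioc a b, ζ x ∂ν
      = ∫ x in Set.Ioc a b, ζ x * deriv β x := by
    intro a b
    rw [hν_dens, withDensity_congr_ae hDcongr,
      setIntegral_withDensity_eq_setIntegral_smul hDmeas.ennreal_toNNReal ζ measurableSet_Ioc]
    refine setIntegral_congr_ae measurableSet_Ioc ?_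
    filter_upwards [hderiv_ae] with x hx _
    rw [NNReal.smul_def, hx]
    rw [mul_comm]
    rfl
  -- change of variables
  have hkey1 : ∀ a b : ℝ, a ≤ b →
      ∫ q in Set.Ioc (β a) (β b), ζ (βr q) = ∫ x in Set.Ioc a b, ζ x ∂ν := by
    intro a b hab
    have hIrange : Set.Ioc (β a) (β b) ⊆ Set.range β := by
      intro q hq
      obtain ⟨t, _, ht⟩ := intermediate_value_Icc hab hβcont.continuousOn ⟨hq.1.le, hq.2⟩
      exact ⟨t, ht⟩
    have hmonoOn : MonotoneOn βr (Set.Ioc (β a) (β b)) := by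
      intro z1 h1 z2 h2 h12
      by_contra hc
      push_neg at hc
      have h21 : z2 ≤ z1 := by
        have := hβmono hc.le
        rwa [hβr_inv _ (hIrange h1), hβr_inv _ (hIrange h2)] at this
      have : z1 = z2 := le_antisymm h12 h21
      rw [this] at hc
      exact lt_irrefl _ hc
    have hmeasβr : AEMeasurable βr (volume.restrict (Set.Ioc (β a) (β b))) :=
      aemeasurable_restrict_of_monotoneOn measurableSet_Ioc hmonoOn
    have hmap : Measure.map βr (volume.restrict (Set.Ioc (β a) (β b)))
        = ν.restrict (Set.Ioc a b) := by
      haveI hfin : IsFiniteMeasure (Measure.map βr (volume.restrict (Set.Ioc (β a) (β b)))) := by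
        constructor
        rw [Measure.map_apply_of_aemeasurable hmeasβr MeasurableSet.univ, Set.preimage_univ,
          Measure.restrict_apply_univ, Real.volume_Ioc]
        exact ENNReal.ofReal_lt_top
      refine Measure.ext_of_Ioc_finite _ _ ?_ fun c d _ => ?_
      · rw [Measure.map_apply_of_aemeasurable hmeasβr MeasurableSet.univ, Set.preimage_univ,
          Measure.restrict_apply_univ, Measure.restrict_apply_univ, hνIoc, Real.volume_Ioc]
      · rw [Measure.map_apply_of_aemeasurable hmeasβr measurableSet_Ioc,
          Measure.restrict_apply' measurableSet_Ioc, Measure.restrict_apply' measurableSet_Ioc]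
        have hae : ((βr ⁻¹' Set.Ioc c d ∩ Set.Ioc (β a) (β b) : Set ℝ))
            =ᵐ[(volume : Measure ℝ)] ((Set.Ioc (β c) (β d) ∩ Set.Ioc (β a) (β b) : Set ℝ)) := by
          rw [MeasureTheory.ae_eq_set]
          constructor
          · refine measure_mono_null (fun q hq => ?_) (measure_singleton (β c))
            obtain ⟨⟨hpre, hqI⟩, hnot⟩ := hq
            have hqr : q ∈ Set.range β := hIrange hqI
            have hqd : q ≤ β d := hA q hqr d hpre.2
            have hqc : q ≤ β c := by
              by_contra hcc
              push_neg at hcc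
              exact hnot ⟨⟨hcc, hqd⟩, hqI⟩
            have : ¬ q < β c := fun hlt => (hB' q hqr c hlt).not_gt hpre.1
            have : q = β c := le_antisymm hqc (not_lt.1 this)
            simpa using this
          · refine measure_mono_null (fun q hq => ?_) (measure_singleton (β d))
            obtain ⟨⟨hqcd, hqI⟩, hnot⟩ := hq
            have hqr : q ∈ Set.range β := hIrange hqI
            have hc1 : c < βr q := hC q hqr c hqcd.1
            have hqd : ¬ βr q ≤ d := by
              intro hle
              exact hnot ⟨⟨hc1, hle⟩, hqI⟩
            have : ¬ q < β d := fun hlt => hqd (hB' q hqr d hlt)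
            have : q = β d := le_antisymm hqcd.2 (not_lt.1 this)
            simpa using this
        rw [measure_congr hae, Set.Ioc_inter_Ioc, Real.volume_Ioc, Set.Ioc_inter_Ioc, hνIoc,
          hβmono.map_min, hβmono.map_max]
    have hint := MeasureTheory.integral_map hmeasβr hζcont.aestronglyMeasurable
      (f := fun y => ζ y)
    rw [hmap] at hint
    exact hint.symm
  -- the main identity
  have keymain : ∀ s : ℝ, B (β s) = ∫ q in (0:ℝ)..s, ζ q * deriv β q := by
    intro s
    rw [hB _ ⟨s, rfl⟩]
    rcases le_total 0 s with hs | hs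
    · have h0 : (0:ℝ) ≤ β s := by rw [← hβ0]; exact hβmono hs
      rw [intervalIntegral.integral_of_le h0, intervalIntegral.integral_of_le hs]
      have h1 := hkey1 0 s hs
      rw [hβ0] at h1
      rw [h1, hkey2 0 s]
    · have h0 : β s ≤ (0:ℝ) := by rw [← hβ0]; exact hβmono hs
      rw [intervalIntegral.integral_of_ge h0, intervalIntegral.integral_of_ge hs]
      have h1 := hkey1 s 0 hs
      rw [hβ0] at h1
      rw [h1, hkey2 s 0]
  -- bounds on the derivative
  have hderiv_le : ∀ x : ℝ, |deriv β x| ≤ Lβ := by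
    intro x
    by_cases hx : DifferentiableAt ℝ β x
    · have h1 : Tendsto (slope β x) (𝓝[≠] x) (𝓝 (deriv β x)) :=
        hasDerivAt_iff_tendsto_slope.1 hx.hasDerivAt
      refine le_of_tendsto h1.abs ?_
      filter_upwards [self_mem_nhdsWithin] with y hy
      have hyx : y - x ≠ 0 := sub_ne_zero.2 hy
      rw [slope_def_field, abs_div, div_le_iff₀ (abs_pos.2 hyx)]
      have h := hβlip.dist_le_mul y x
      rwa [Real.dist_eq, Real.dist_eq, hLβ'] at h
    · rw [deriv_zero_of_not_differentiableAt hx]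
      simpa using hLβ.le
  have hderiv_nonneg : ∀ x : ℝ, 0 ≤ deriv β x := by
    intro x
    by_cases hx : DifferentiableAt ℝ β x
    · have h1 : Tendsto (slope β x) (𝓝[>] x) (𝓝 (deriv β x)) :=
        (hasDerivAt_iff_tendsto_slope.1 hx.hasDerivAt).mono_left
          (nhdsWithin_mono x fun y hy => Set.mem_compl_singleton_iff.mpr (ne_of_gt hy))
      refine ge_of_tendsto h1 ?_
      filter_upwards [self_mem_nhdsWithin] with y hy
      rw [slope_def_field]
      exact div_nonneg (sub_nonneg.2 (hβmono (le_of_lt hy))) (sub_nonneg.2 (le_of_lt hy))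
    · rw [deriv_zero_of_not_differentiableAt hx]
  -- integrability of the integrand
  have hintegrand_meas : Measurable fun q : ℝ => ζ q * deriv β q :=
    hζcont.measurable.mul (measurable_deriv β)
  have hint : ∀ a b : ℝ, IntervalIntegrable (fun q => ζ q * deriv β q) volume a b := by
    intro a b
    have hcont : IntervalIntegrable (fun q => |ζ q| * Lβ) volume a b :=
      ((hζcont.abs.mul continuous_const)).intervalIntegrable a b
    refine hcont.mono_fun' hintegrand_meas.aestronglyMeasurable.restrict ?_
    refine Filter.Eventually.of_forall fun q => ?_
    simp only [Real.norm_eq_abs, abs_mul]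
    exact mul_le_mul_of_nonneg_left (hderiv_le q) (abs_nonneg _)
  -- continuity
  have hcont : Continuous fun s : ℝ => B (β s) := by
    have heq : (fun s : ℝ => B (β s)) = fun s => ∫ q in (0:ℝ)..s, ζ q * deriv β q :=
      funext keymain
    rw [heq]
    exact intervalIntegral.continuous_primitive hint 0
  -- nonnegativity
  have hnn : ∀ s : ℝ, 0 ≤ B (β s) := by
    intro s
    rw [keymain s]
    rcases le_total 0 s with hs | hs
    · refine intervalIntegral.integral_nonneg hs fun q hq => ?_
      have h1 : 0 ≤ ζ q := by rw [← hζ0]; exact hζmono hq.1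
      exact mul_nonneg h1 (hderiv_nonneg q)
    · have h1 : 0 ≤ ∫ q in s..(0:ℝ), -(ζ q * deriv β q) := by
        refine intervalIntegral.integral_nonneg hs fun q hq => ?_
        have hζq : ζ q ≤ 0 := by rw [← hζ0]; exact hζmono hq.2
        exact neg_nonneg.2 (mul_nonpos_iff.mpr (Or.inr ⟨hζq, hderiv_nonneg q⟩))
      rw [intervalIntegral.integral_neg] at h1
      rw [intervalIntegral.integral_symm s 0]
      linarith
  exact ⟨keymain, hcont, hnn⟩
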